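/- Let Ω be a countably infinite set and S = Sym(Ω). Then S_(A) ≈ S_(B) for all A, B ∈ 𝒫; that is, the subgroups determined by partitions of Ω into finite sets of unbounded cardinality are mutually ≈-equivalent. -/

import Mathlib

open scoped Cardinal ENNReal

universe u

variable {Ω : Type u}

/-- The pointwise stabilizer of a set `s` inside a subgroup `G` of `Sym(Ω)`. -/
def pstab (G : Subgroup (Equiv.Perm Ω)) (s : Set Ω) : Subgroup (Equiv.Perm Ω) where
  carrier := {g | g ∈ G ∧ ∀ x ∈ s, g x = x}
  one_mem' := ⟨G.one_mem, fun _ _ => rfl⟩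
  mul_mem' := by
    rintro a b ⟨haG, ha⟩ ⟨hbG, hb⟩
    refine ⟨G.mul_mem haG hbG, fun x hx => ?_⟩
    simp [Equiv.Perm.mul_apply, hb x hx, ha x hx]
  inv_mem' := by
    rintro a ⟨haG, ha⟩
    refine ⟨G.inv_mem haG, fun x hx => ?_⟩
    conv_lhs => rw [← ha x hx]
    exact Equiv.symm_apply_apply a x

/-- For a family `A` of subsets of `Ω`, the subgroup of permutations carrying each
member of `A` onto itself. -/
def SAgrp (A : Set (Set Ω)) : Subgroup (Equiv.Perm Ω) where
  carrier := {f | ∀ s ∈ A, (f : Ω → Ω) '' s = s}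
  one_mem' := fun s _ => by simp
  mul_mem' := by
    intro a b ha hb s hs
    rw [Equiv.Perm.coe_mul, Set.image_comp, hb s hs, ha s hs]
  inv_mem' := by
    intro a ha s hs
    conv_lhs => rw [← ha s hs]
    rw [← Set.image_comp]
    simp

/-- `G₁ ≼_κ G₂` : there is a set `U` of permutations of cardinality `< κ` with
`G₁ ≤ ⟨G₂ ∪ U⟩`. -/
def Prec (κ : Cardinal.{u}) (G₁ G₂ : Subgroup (Equiv.Perm Ω)) : Prop :=
  ∃ U : Set (Equiv.Perm Ω), #U < κ ∧
    G₁ ≤ Subgroup.closure ((G₂ : Set (Equiv.Perm Ω)) ∪ U)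

/-- `G₁ ≈_κ G₂`. -/
def CApprox (κ : Cardinal.{u}) (G₁ G₂ : Subgroup (Equiv.Perm Ω)) : Prop :=
  Prec κ G₁ G₂ ∧ Prec κ G₂ G₁

/-- `G₁ ≼ G₂` (i.e. `≼_{ℵ₀}`, with `U` finite). -/
def PrecF (G₁ G₂ : Subgroup (Equiv.Perm Ω)) : Prop :=
  ∃ U : Set (Equiv.Perm Ω), U.Finite ∧
    G₁ ≤ Subgroup.closure ((G₂ : Set (Equiv.Perm Ω)) ∪ U)

/-- `G₁ ≈ G₂` (i.e. `≈_{ℵ₀}`). -/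
def ApproxF (G₁ G₂ : Subgroup (Equiv.Perm Ω)) : Prop :=
  PrecF G₁ G₂ ∧ PrecF G₂ G₁

/-- A generalized metric: a `[0,∞]`-valued metric. -/
structure IsGenMetric (d : Ω → Ω → ℝ≥0∞) : Prop where
  eq_zero_iff : ∀ α β, d α β = 0 ↔ α = β
  symm : ∀ α β, d α β = d β α
  triangle : ∀ α β γ, d α γ ≤ d α β + d β γ

/-- Open ball for a generalized metric. -/
def gball (d : Ω → Ω → ℝ≥0∞) (α : Ω) (r : ℝ≥0∞) : Set Ω := {β | d α β < r}

/-- `(Ω, d)` is `κ`-uncrowded: every ball of finite radius has `< κ` elements. -/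
def Uncrowded (κ : Cardinal.{u}) (d : Ω → Ω → ℝ≥0∞) : Prop :=
  ∀ (α : Ω) (r : ℝ≥0∞), r < ⊤ → #(gball d α r) < κ

/-- `(Ω, d)` is uniformly `κ`-uncrowded. -/
def UnifUncrowded (κ : Cardinal.{u}) (d : Ω → Ω → ℝ≥0∞) : Prop :=
  ∀ r : ℝ≥0∞, r < ⊤ → ∃ lam : Cardinal.{u}, lam < κ ∧ ∀ α : Ω, #(gball d α r) ≤ lam

/-- `g` is bounded with respect to `d` : `‖g‖_d = ⨆ α, d α (αg) < ∞`. -/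
def BoundedPerm (d : Ω → Ω → ℝ≥0∞) (g : Equiv.Perm Ω) : Prop :=
  (⨆ α : Ω, d α (g α)) < ⊤

/-- The function topology on `Sym(Ω)`: induced from the product topology on `Ω → Ω`
with `Ω` discrete. -/
def permTop (Ω : Type u) : TopologicalSpace (Equiv.Perm Ω) :=
  TopologicalSpace.induced (fun g : Equiv.Perm Ω => (g : Ω → Ω))
    (@Pi.topologicalSpace Ω (fun _ => Ω) (fun _ => ⊥))

/-- `G` is closed in `Sym(Ω)` in the function topology. -/
def FTClosed (G : Subgroup (Equiv.Perm Ω)) : Prop :=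
  @IsClosed _ (permTop Ω) (G : Set (Equiv.Perm Ω))

/-- `G` is discrete in the function topology. -/
def FTDiscrete (G : Subgroup (Equiv.Perm Ω)) : Prop :=
  @DiscreteTopology G
    (TopologicalSpace.induced (fun x : G => (x : Equiv.Perm Ω)) (permTop Ω))

/-- The orbit of `α` under a subgroup `H ≤ Sym(Ω)`. -/
def orb (H : Subgroup (Equiv.Perm Ω)) (α : Ω) : Set Ω := {β | ∃ g ∈ H, g α = β}

/-- A partition of `Ω`: a set of disjoint nonempty subsets with union `Ω`. -/
def IsPartition (A : Set (Set Ω)) : Prop :=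
  (∀ s ∈ A, s.Nonempty) ∧ A.PairwiseDisjoint id ∧ ⋃₀ A = Set.univ

/-- `A ∈ 𝒫`: a partition of `Ω` into finite subsets of unbounded cardinality. -/
def MemP (A : Set (Set Ω)) : Prop :=
  IsPartition A ∧ (∀ s ∈ A, s.Finite) ∧ ∀ n : ℕ, ∃ s ∈ A, (n : ℕ∞) < s.encard

/-- `A ∈ 𝒬`: a partition of `Ω` with a common finite bound on the cardinalities of
its members, infinitely many of which have more than one element. -/
def MemQ (A : Set (Set Ω)) : Prop :=
  IsPartition A ∧ (∃ n : ℕ, ∀ s ∈ A, s.encard ≤ (n : ℕ∞)) ∧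
    {s | s ∈ A ∧ 1 < s.encard}.Infinite

/-- The subgroup `FN(Ω,d)` of permutations of finite norm with respect to a
generalized metric `d`. -/
def FN (d : Ω → Ω → ℝ≥0∞) (hd : IsGenMetric d) : Subgroup (Equiv.Perm Ω) where
  carrier := {g | (⨆ α : Ω, d α (g α)) < ⊤}
  one_mem' := by
    have h : (⨆ α : Ω, d α ((1 : Equiv.Perm Ω) α)) ≤ 0 :=
      iSup_le fun α => le_of_eq ((hd.eq_zero_iff α ((1 : Equiv.Perm Ω) α)).2 rfl)
    exact lt_of_le_of_lt h (by simp)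
  mul_mem' := by
    intro a b ha hb
    have h : (⨆ α : Ω, d α ((a * b) α)) ≤
        (⨆ α : Ω, d α (b α)) + (⨆ α : Ω, d α (a α)) := by
      refine iSup_le fun α => ?_
      calc d α ((a * b) α) = d α (a (b α)) := by rw [Equiv.Perm.mul_apply]
        _ ≤ d α (b α) + d (b α) (a (b α)) := hd.triangle _ _ _
        _ ≤ _ := add_le_add (le_iSup (fun α : Ω => d α (b α)) α)
              (le_iSup (fun β : Ω => d β (a β)) (b α))
    exact lt_of_le_of_lt h (ENNReal.add_lt_top.2 ⟨hb, ha⟩)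
  inv_mem' := by
    intro a ha
    have h : (⨆ α : Ω, d α (a⁻¹ α)) ≤ ⨆ β : Ω, d β (a β) := by
      refine iSup_le fun α => ?_
      have e : d α (a⁻¹ α) = d (a⁻¹ α) (a (a⁻¹ α)) := by
        rw [Equiv.Perm.inv_def, Equiv.apply_symm_apply]; exact hd.symm _ _
      rw [e]
      exact le_iSup (fun β : Ω => d β (a β)) (a⁻¹ α)
    exact lt_of_le_of_lt h ha

section Stmt9Aux

open Set

variable {Ω : Type u}

private lemma mem_SAgrp_iff {A : Set (Set Ω)} {f : Equiv.Perm Ω} :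
    f ∈ SAgrp A ↔ ∀ s ∈ A, (f : Ω → Ω) '' s = s := Iff.rfl

private lemma SAgrp_apply_mem {A : Set (Set Ω)} {f : Equiv.Perm Ω} (hf : f ∈ SAgrp A)
    {s : Set Ω} (hs : s ∈ A) {x : Ω} (hx : x ∈ s) : f x ∈ s := by
  have h : (f : Ω → Ω) '' s = s := mem_SAgrp_iff.1 hf s hs
  rw [← h]
  exact Set.mem_image_of_mem _ hx

/-- The conjugation lemma: if `g` moves the "moved blocks" of `f` into members of `B`,
then `g f g⁻¹ ∈ S_(B)`. -/
private lemma conj_mem_SAgrp {B : Set (Set Ω)} (hBd : B.PairwiseDisjoint id)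
    {f g : Equiv.Perm Ω}
    (hf : ∀ x : Ω, f x ≠ x → ∃ b ∈ B, g x ∈ b ∧ g (f x) ∈ b) :
    g * f * g⁻¹ ∈ SAgrp B := by
  have key : ∀ b ∈ B, ∀ x : Ω, x ∈ b ↔ (g * f * g⁻¹) x ∈ b := by
    intro b hb x
    have hx : (g * f * g⁻¹) x = g (f (g⁻¹ x)) := rfl
    by_cases hfix : f (g⁻¹ x) = g⁻¹ x
    · rw [hx, hfix]; simp
    · obtain ⟨b', hb', h1, h2⟩ := hf _ hfix
      rw [Equiv.Perm.inv_def, Equiv.apply_symm_apply] at h1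
      constructor
      · intro hxb
        have hbb : b = b' := hBd.elim hb hb' (Set.not_disjoint_iff.2 ⟨x, hxb, h1⟩)
        rw [hx, hbb]; exact h2
      · intro hxb
        have hbb : b = b' := hBd.elim hb hb'
          (Set.not_disjoint_iff.2 ⟨(g * f * g⁻¹) x, hxb, hx ▸ h2⟩)
        rw [hbb]; exact h1
  refine mem_SAgrp_iff.2 fun b hb => ?_
  apply Set.ext
  intro z
  constructor
  · rintro ⟨y, hy, rfl⟩
    exact (key b hb y).1 hy
  · intro hz
    refine ⟨(g * f * g⁻¹)⁻¹ z, (key b hb _).2 ?_, by simp⟩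
    simpa using hz

private lemma emb_of_encard_le {s t : Set Ω} (ht : t.Finite) (h : s.encard ≤ t.encard) :
    Nonempty (↥s ↪ ↥t) := by
  have hs : s.Finite := Set.encard_lt_top_iff.1 (lt_of_le_of_lt h ht.encard_lt_top)
  haveI := hs.fintype
  haveI := ht.fintype
  apply Function.Embedding.nonempty_of_card_le
  have hs' : s.encard = (Fintype.card ↥s : ℕ∞) := by
    rw [Set.encard_eq_coe_toFinset_card, Set.toFinset_card]
  have ht' : t.encard = (Fintype.card ↥t : ℕ∞) := by
    rw [Set.encard_eq_coe_toFinset_card, Set.toFinset_card]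
  rw [hs', ht'] at h
  exact_mod_cast h

/-- Extending an injection defined on a set, with infinite complements on both sides,
to a permutation. -/
private lemma exists_perm_extend [Countable Ω] (G₀ : Ω → Ω) (s : Set Ω)
    (hinj : Set.InjOn G₀ s) (hs : (sᶜ : Set Ω).Infinite) (ht : ((G₀ '' s)ᶜ : Set Ω).Infinite) :
    ∃ g : Equiv.Perm Ω, ∀ x ∈ s, g x = G₀ x := by
  classical
  haveI : Infinite ↥(sᶜ : Set Ω) := Set.infinite_coe_iff.2 hs
  haveI : Infinite ↥((G₀ '' s)ᶜ : Set Ω) := Set.infinite_coe_iff.2 ht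
  obtain ⟨e'⟩ : Nonempty (↥(sᶜ : Set Ω) ≃ ↥((G₀ '' s)ᶜ : Set Ω)) := nonempty_equiv_of_countable
  refine ⟨(Equiv.Set.sumCompl s).symm.trans ((Equiv.sumCongr (Equiv.Set.imageOfInjOn G₀ s hinj) e').trans
    (Equiv.Set.sumCompl (G₀ '' s))), ?_⟩
  intro x hx
  simp only [Equiv.trans_apply, Equiv.Set.sumCompl_symm_apply_of_mem hx,
    Equiv.sumCongr_apply, Sum.map_inl, Equiv.Set.sumCompl_apply_inl]
  rfl

/-- The packing lemma: given a disjoint sequence of finite sets not covering a cofinite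
part of `Ω`, and a disjoint family `B` of finite sets of unbounded size, there is a
permutation of `Ω` mapping each set of the sequence into a member of `B`. -/
private lemma exists_packing [Countable Ω] [Infinite Ω]
    (a : ℕ → Set Ω) (hd : ∀ m n, m ≠ n → Disjoint (a m) (a n))
    (hfin : ∀ n, (a n).Finite)
    (hcompl : ((⋃ n, a n)ᶜ : Set Ω).Infinite)
    {B : Set (Set Ω)} (hBd : B.PairwiseDisjoint id) (hBfin : ∀ b ∈ B, b.Finite)
    (hBbig : ∀ n : ℕ, ∃ b ∈ B, (n : ℕ∞) < b.encard) :
    ∃ g : Equiv.Perm Ω, ∀ n, ∃ b ∈ B, (g : Ω → Ω) '' a n ⊆ b := by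
  classical
  have hB2 : ∀ c : ℕ∞, ∃ b, c ≠ ⊤ → b ∈ B ∧ c < b.encard := by
    intro c
    by_cases hc : c = ⊤
    · exact ⟨∅, fun h => absurd hc h⟩
    · lift c to ℕ using hc
      obtain ⟨b, hb, hlt⟩ := hBbig c
      exact ⟨b, fun _ => ⟨hb, hlt⟩⟩
  choose χ hχ using hB2
  set F : ℕ → Set Ω := fun n =>
    Nat.rec (χ (a 0).encard) (fun n p => χ (max p.encard (a (n + 1)).encard)) n with hFdef
  have hane : ∀ n, (a n).encard ≠ ⊤ := fun n => Set.encard_ne_top_iff.2 (hfin n)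
  have hFB : ∀ n, F n ∈ B := by
    intro n
    induction n with
    | zero => exact (hχ _ (hane 0)).1
    | succ n ih =>
      have hne : max (F n).encard (a (n + 1)).encard ≠ ⊤ := by
        have h1 : (F n).encard < ⊤ := (hBfin _ ih).encard_lt_top
        have h2 : (a (n + 1)).encard < ⊤ := (hfin (n + 1)).encard_lt_top
        exact (max_lt h1 h2).ne
      exact (hχ _ hne).1
  have hargne : ∀ n, max (F n).encard (a (n + 1)).encard ≠ ⊤ := by
    intro n
    have h1 : (F n).encard < ⊤ := (hBfin _ (hFB n)).encard_lt_top
    have h2 : (a (n + 1)).encard < ⊤ := (hfin (n + 1)).encard_lt_top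
    exact (max_lt h1 h2).ne
  have hFlt : ∀ n, (a n).encard < (F n).encard := by
    intro n
    cases n with
    | zero => exact (hχ _ (hane 0)).2
    | succ n =>
      exact lt_of_le_of_lt (le_max_right (F n).encard _) (hχ _ (hargne n)).2
  have hFmono : StrictMono fun n => (F n).encard :=
    strictMono_nat_of_lt_succ fun n =>
      lt_of_le_of_lt (le_max_left _ (a (n + 1)).encard) (hχ _ (hargne n)).2
  have hFinj : Function.Injective F := fun m n h => hFmono.injective (by rw [h])
  have hFne : ∀ m n, m ≠ n → Disjoint (F m) (F n) := fun m n h =>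
    hBd (hFB m) (hFB n) (fun he => h (hFinj he))
  -- injections of the `a n` into the `F n`
  have hemb : ∀ n, Nonempty (↥(a n) ↪ ↥(F n)) := fun n =>
    emb_of_encard_le (hBfin _ (hFB n)) (hFlt n).le
  have i : ∀ n, ↥(a n) ↪ ↥(F n) := fun n => (hemb n).some
  set G₀ : Ω → Ω := fun x =>
    if h : ∃ n, x ∈ a n then (i h.choose ⟨x, h.choose_spec⟩ : Ω) else x with hG₀def
  have hval : ∀ n x (hx : x ∈ a n), G₀ x = (i n ⟨x, hx⟩ : Ω) := by
    intro n x hx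
    have h : ∃ m, x ∈ a m := ⟨n, hx⟩
    have hm : h.choose = n := by
      by_contra hne
      exact Set.disjoint_left.mp (hd _ _ hne) h.choose_spec hx
    have hG : G₀ x = (i h.choose ⟨x, h.choose_spec⟩ : Ω) := dif_pos h
    subst hm
    exact hG
  have hG₀ : ∀ n, ∀ x ∈ a n, G₀ x ∈ F n := by
    intro n x hx
    rw [hval n x hx]
    exact (i n ⟨x, hx⟩).2
  have hinj : Set.InjOn G₀ (⋃ n, a n) := by
    intro x hx y hy hxy
    obtain ⟨n, hxn⟩ := Set.mem_iUnion.1 hx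
    obtain ⟨m, hym⟩ := Set.mem_iUnion.1 hy
    have hnm : n = m := by
      by_contra hne
      exact Set.disjoint_left.mp (hFne n m hne) (hG₀ n x hxn) (hxy ▸ hG₀ m y hym)
    subst hnm
    rw [hval n x hxn, hval n y hym] at hxy
    have := (i n).injective (Subtype.coe_injective hxy)
    exact congrArg Subtype.val this
  have htinf : ((G₀ '' ⋃ n, a n)ᶜ : Set Ω).Infinite := by
    have hy : ∀ n, ∃ y, y ∈ F n ∧ y ∉ G₀ '' (a n) := by
      intro n
      have h1 : (G₀ '' a n).encard < (F n).encard := by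
        rw [(hinj.mono (Set.subset_iUnion a n)).encard_image]
        exact hFlt n
      by_contra h
      push_neg at h
      exact absurd (Set.encard_le_encard fun y hy => h y hy) (not_le.2 h1)
    choose y hyF hyn using hy
    apply Set.infinite_of_injective_forall_mem (f := y)
    · intro m n h
      by_contra hne
      exact Set.disjoint_left.mp (hFne m n hne) (hyF m) (h ▸ hyF n)
    · intro n
      intro hmem
      obtain ⟨x, hx, hGx⟩ := hmem
      obtain ⟨m, hxm⟩ := Set.mem_iUnion.1 hx
      by_cases hnm : m = n
      · subst hnm
        exact hyn m ⟨x, hxm, hGx⟩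
      · exact Set.disjoint_left.mp (hFne m n hnm) (hG₀ m x hxm) (hGx ▸ hyF n)
  obtain ⟨g, hg⟩ := exists_perm_extend G₀ (⋃ n, a n) hinj hcompl htinf
  refine ⟨g, fun n => ⟨F n, hFB n, ?_⟩⟩
  rintro _ ⟨x, hx, rfl⟩
  rw [hg x (Set.mem_iUnion.2 ⟨n, hx⟩)]
  exact hG₀ n x hx

private lemma precF_SAgrp [Countable Ω] [Infinite Ω] {A B : Set (Set Ω)}
    (hA : MemP A) (hB : MemP B) : PrecF (SAgrp A) (SAgrp B) := by
  classical
  obtain ⟨⟨hAne, hAdisj, hAcov⟩, hAfin, -⟩ := hA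
  obtain ⟨⟨hBne, hBdisj, hBcov⟩, hBfin, hBbig⟩ := hB
  -- `A` is a countably infinite family
  have hptA : ∀ s : ↥A, ∃ x, x ∈ (s : Set Ω) := fun s => hAne s s.2
  choose pt hpt using hptA
  have hptinj : Function.Injective pt := by
    intro s u h
    exact Subtype.ext (hAdisj.elim s.2 u.2
      (Set.not_disjoint_iff.2 ⟨pt s, hpt s, h ▸ hpt u⟩))
  haveI : Countable ↥A := hptinj.countable
  haveI : Infinite ↥A := by
    rw [Set.infinite_coe_iff]
    intro hfin
    have hUfin : (⋃₀ A).Finite := Set.Finite.sUnion hfin hAfin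
    rw [hAcov] at hUfin
    exact Set.infinite_univ hUfin
  obtain ⟨e⟩ : Nonempty (ℕ ≃ ↥A) := nonempty_equiv_of_countable
  set aE : ℕ → Set Ω := fun n => ((e (2 * n) : ↥A) : Set Ω) with haE
  set aO : ℕ → Set Ω := fun n => ((e (2 * n + 1) : ↥A) : Set Ω) with haO
  have haEA : ∀ n, aE n ∈ A := fun n => (e (2 * n)).2
  have haOA : ∀ n, aO n ∈ A := fun n => (e (2 * n + 1)).2
  have hdis : ∀ (k l : ℕ), k ≠ l → Disjoint ((e k : ↥A) : Set Ω) ((e l : ↥A) : Set Ω) := by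
    intro k l hkl
    refine hAdisj (e k).2 (e l).2 ?_
    intro hcontr
    exact hkl (e.injective (Subtype.ext hcontr))
  have hdE : ∀ m n, m ≠ n → Disjoint (aE m) (aE n) := fun m n h =>
    hdis _ _ (by omega)
  have hdO : ∀ m n, m ≠ n → Disjoint (aO m) (aO n) := fun m n h =>
    hdis _ _ (by omega)
  have hdEO : ∀ m n, Disjoint (aE m) (aO n) := fun m n =>
    hdis _ _ (by omega)
  set Ω₁ : Set Ω := ⋃ n, aE n with hΩ₁
  set Ω₂ : Set Ω := ⋃ n, aO n with hΩ₂
  have hd12 : ∀ x, x ∈ Ω₁ → x ∈ Ω₂ → False := by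
    intro x h1 h2
    obtain ⟨m, hm⟩ := Set.mem_iUnion.1 h1
    obtain ⟨n, hn⟩ := Set.mem_iUnion.1 h2
    exact Set.disjoint_left.mp (hdEO m n) hm hn
  have hcover : ∀ x : Ω, x ∈ Ω₁ ∨ x ∈ Ω₂ := by
    intro x
    have hx : x ∈ ⋃₀ A := by rw [hAcov]; trivial
    obtain ⟨s, hs, hxs⟩ := hx
    obtain ⟨k, hk⟩ : ∃ k, ((e k : ↥A) : Set Ω) = s := ⟨e.symm ⟨s, hs⟩, by simp⟩
    rcases Nat.even_or_odd k with ⟨m, hm⟩ | ⟨m, hm⟩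
    · left
      refine Set.mem_iUnion.2 ⟨m, ?_⟩
      have : aE m = s := by rw [haE]; simp only; rw [show 2 * m = k by omega, hk]
      rw [this]; exact hxs
    · right
      refine Set.mem_iUnion.2 ⟨m, ?_⟩
      have : aO m = s := by rw [haO]; simp only; rw [show 2 * m + 1 = k by omega, hk]
      rw [this]; exact hxs
  -- both unions are infinite
  have hΩ₁inf : Ω₁.Infinite := by
    have : ∀ n, ∃ x, x ∈ aE n := fun n => hAne _ (haEA n)
    choose q hq using this
    apply Set.infinite_of_injective_forall_mem (f := q)
    · intro m n h
      by_contra hne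
      exact Set.disjoint_left.mp (hdE m n hne) (hq m) (h ▸ hq n)
    · exact fun n => Set.mem_iUnion.2 ⟨n, hq n⟩
  have hΩ₂inf : Ω₂.Infinite := by
    have : ∀ n, ∃ x, x ∈ aO n := fun n => hAne _ (haOA n)
    choose q hq using this
    apply Set.infinite_of_injective_forall_mem (f := q)
    · intro m n h
      by_contra hne
      exact Set.disjoint_left.mp (hdO m n hne) (hq m) (h ▸ hq n)
    · exact fun n => Set.mem_iUnion.2 ⟨n, hq n⟩
  have hcE : ((⋃ n, aE n)ᶜ : Set Ω).Infinite :=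
    hΩ₂inf.mono fun x hx => fun h1 => hd12 x h1 hx
  have hcO : ((⋃ n, aO n)ᶜ : Set Ω).Infinite :=
    hΩ₁inf.mono fun x hx => fun h2 => hd12 x hx h2
  obtain ⟨gE, hgE⟩ := exists_packing aE hdE (fun n => hAfin _ (haEA n)) hcE hBdisj hBfin hBbig
  obtain ⟨gO, hgO⟩ := exists_packing aO hdO (fun n => hAfin _ (haOA n)) hcO hBdisj hBfin hBbig
  refine ⟨{gE, gO}, (Set.finite_singleton gO).insert gE, ?_⟩
  set C : Set (Equiv.Perm Ω) := (SAgrp B : Set (Equiv.Perm Ω)) ∪ {gE, gO} with hC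
  have hgEC : gE ∈ Subgroup.closure C := Subgroup.subset_closure (Or.inr (by simp))
  have hgOC : gO ∈ Subgroup.closure C := Subgroup.subset_closure (Or.inr (by simp))
  have hSBC : ∀ h : Equiv.Perm Ω, h ∈ SAgrp B → h ∈ Subgroup.closure C := fun h hh =>
    Subgroup.subset_closure (Or.inl hh)
  intro f hf
  -- `f` preserves `Ω₁` and `Ω₂`
  have hf1 : ∀ x, x ∈ Ω₁ → f x ∈ Ω₁ := by
    intro x hx
    obtain ⟨n, hn⟩ := Set.mem_iUnion.1 hx
    exact Set.mem_iUnion.2 ⟨n, SAgrp_apply_mem hf (haEA n) hn⟩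
  have hf2 : ∀ x, x ∈ Ω₂ → f x ∈ Ω₂ := by
    intro x hx
    obtain ⟨n, hn⟩ := Set.mem_iUnion.1 hx
    exact Set.mem_iUnion.2 ⟨n, SAgrp_apply_mem hf (haOA n) hn⟩
  have hiff1 : ∀ x, x ∈ Ω₁ ↔ f x ∈ Ω₁ := by
    intro x
    refine ⟨hf1 x, fun hx => ?_⟩
    rcases hcover x with h | h
    · exact h
    · exact absurd hx fun hx' => hd12 (f x) hx' (hf2 x h)
  have hiff2 : ∀ x, x ∈ Ω₂ ↔ f x ∈ Ω₂ := by
    intro x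
    refine ⟨hf2 x, fun hx => ?_⟩
    rcases hcover x with h | h
    · exact absurd hx fun hx' => hd12 (f x) (hf1 x h) hx'
    · exact h
  set f₁ : Equiv.Perm Ω := Equiv.Perm.ofSubtype (f.subtypePerm fun x => (hiff1 x).symm) with hf₁
  set f₂ : Equiv.Perm Ω := Equiv.Perm.ofSubtype (f.subtypePerm fun x => (hiff2 x).symm) with hf₂
  have happ1 : ∀ x, x ∈ Ω₁ → f₁ x = f x := by
    intro x hx
    rw [hf₁, Equiv.Perm.ofSubtype_apply_of_mem _ hx]
    rfl
  have hfix1 : ∀ x, x ∉ Ω₁ → f₁ x = x := fun x hx =>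
    Equiv.Perm.ofSubtype_apply_of_not_mem _ hx
  have happ2 : ∀ x, x ∈ Ω₂ → f₂ x = f x := by
    intro x hx
    rw [hf₂, Equiv.Perm.ofSubtype_apply_of_mem _ hx]
    rfl
  have hfix2 : ∀ x, x ∉ Ω₂ → f₂ x = x := fun x hx =>
    Equiv.Perm.ofSubtype_apply_of_not_mem _ hx
  have hmul : f = f₁ * f₂ := by
    ext x
    rw [Equiv.Perm.mul_apply]
    by_cases hx : x ∈ Ω₂
    · rw [happ2 x hx, hfix1 _ fun h1 => hd12 (f x) h1 (hf2 x hx)]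
    · rw [hfix2 x hx]
      rcases hcover x with h | h
      · exact (happ1 x h).symm ▸ (happ1 x h)
      · exact absurd h hx
  -- conjugates land in S_(B)
  have hconj2 : gO * f₂ * gO⁻¹ ∈ SAgrp B := by
    apply conj_mem_SAgrp hBdisj
    intro x hxne
    have hx2 : x ∈ Ω₂ := by
      by_contra h
      exact hxne (hfix2 x h)
    obtain ⟨n, hn⟩ := Set.mem_iUnion.1 hx2
    obtain ⟨b, hb, hsub⟩ := hgO n
    refine ⟨b, hb, hsub ⟨x, hn, rfl⟩, ?_⟩
    have hfx : f₂ x ∈ aO n := by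
      rw [happ2 x hx2]
      exact SAgrp_apply_mem hf (haOA n) hn
    exact hsub ⟨f₂ x, hfx, rfl⟩
  have hconj1 : gE * f₁ * gE⁻¹ ∈ SAgrp B := by
    apply conj_mem_SAgrp hBdisj
    intro x hxne
    have hx1 : x ∈ Ω₁ := by
      by_contra h
      exact hxne (hfix1 x h)
    obtain ⟨n, hn⟩ := Set.mem_iUnion.1 hx1
    obtain ⟨b, hb, hsub⟩ := hgE n
    refine ⟨b, hb, hsub ⟨x, hn, rfl⟩, ?_⟩
    have hfx : f₁ x ∈ aE n := by
      rw [happ1 x hx1]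
      exact SAgrp_apply_mem hf (haEA n) hn
    exact hsub ⟨f₁ x, hfx, rfl⟩
  have hf₁C : f₁ ∈ Subgroup.closure C := by
    have h : f₁ = gE⁻¹ * (gE * f₁ * gE⁻¹) * gE := by group
    rw [h]
    exact Subgroup.mul_mem _ (Subgroup.mul_mem _ (Subgroup.inv_mem _ hgEC)
      (hSBC _ hconj1)) hgEC
  have hf₂C : f₂ ∈ Subgroup.closure C := by
    have h : f₂ = gO⁻¹ * (gO * f₂ * gO⁻¹) * gO := by group
    rw [h]
    exact Subgroup.mul_mem _ (Subgroup.mul_mem _ (Subgroup.inv_mem _ hgOC)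
      (hSBC _ hconj2)) hgOC
  rw [hmul]
  exact Subgroup.mul_mem _ hf₁C hf₂C

end Stmt9Aux

/-- (12) of Section 6: the subgroups `S_(A)`, `A ∈ 𝒫`, are mutually
`≈`-equivalent. -/
theorem stmt9 {Ω : Type u} [Countable Ω] [Infinite Ω] (A B : Set (Set Ω))
    (hA : MemP A) (hB : MemP B) : ApproxF (SAgrp A) (SAgrp B) :=
  ⟨precF_SAgrp hA hB, precF_SAgrp hB hA⟩
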